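/- For all n ≥ 0, the adjoining singular word satisfies v_{n-1} = (w_{n-1} v_{n-2})^{d_{n+1}-1} w_{n-1}, where u^k denotes the k-fold concatenation of u. -/

import Mathlib

/-- Letters: `a` is `false`, `b` is `true`. -/
abbrev Word := List Bool

/-- `wpow w k` is the `k`-fold concatenation `w^k`. -/
def wpow (w : Word) (k : ℕ) : Word := (List.replicate k w).flatten

lemma wpow_succ (u : Word) (k : ℕ) : wpow u (k + 1) = u ++ wpow u k := by
  simp [wpow, List.replicate_succ]

lemma wpow_comm (L X : Word) (k : ℕ) :
    L ++ wpow (X ++ L) k = wpow (L ++ X) k ++ L := by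
  induction k with
  | zero => simp [wpow]
  | succ k ih =>
      calc L ++ wpow (X ++ L) (k + 1) = (L ++ X) ++ (L ++ wpow (X ++ L) k) := by
            rw [wpow_succ]; simp [List.append_assoc]
        _ = (L ++ X) ++ (wpow (L ++ X) k ++ L) := by rw [ih]
        _ = wpow (L ++ X) (k + 1) ++ L := by rw [wpow_succ]; simp [List.append_assoc]

lemma s_last_aux (d : ℤ → ℕ) (s : ℤ → Word)
    (hs1 : s (-1) = [true]) (hs0 : s 0 = [false])
    (hs : ∀ n : ℤ, 1 ≤ n → s n = wpow (s (n - 1)) (d n) ++ s (n - 2)) :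
    ∀ m : ℕ, s ((m : ℤ) - 1) =
      (s ((m : ℤ) - 1)).dropLast ++ [if Odd ((m : ℤ) - 1) then true else false] := by
  intro m
  induction m using Nat.strong_induction_on with
  | _ m ih =>
    match m with
    | 0 =>
        have e : ((0 : ℕ) : ℤ) - 1 = -1 := by norm_num
        rw [e, hs1, if_pos ⟨-1, by norm_num⟩]
        rfl
    | 1 =>
        have e : ((1 : ℕ) : ℤ) - 1 = 0 := by norm_num
        rw [e, hs0, if_neg (fun h => by have := Int.odd_iff.mp h; omega)]
        rfl
    | (m + 2) =>
        have e : ((m + 2 : ℕ) : ℤ) - 1 = (m : ℤ) + 1 := by push_cast; ring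
        rw [e]
        have h := hs ((m : ℤ) + 1) (by omega)
        have e1 : (m : ℤ) + 1 - 1 = (m : ℤ) := by ring
        have e2 : (m : ℤ) + 1 - 2 = (m : ℤ) - 1 := by ring
        rw [e1, e2] at h
        have hb := ih m (by omega)
        have hpar : Odd ((m : ℤ) + 1) ↔ Odd ((m : ℤ) - 1) := by
          simp only [Int.odd_iff]; omega
        rw [hb, ← List.append_assoc] at h
        rw [h, List.dropLast_concat]
        simp [hpar]

lemma s_last (d : ℤ → ℕ) (s : ℤ → Word)
    (hs1 : s (-1) = [true]) (hs0 : s 0 = [false])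
    (hs : ∀ n : ℤ, 1 ≤ n → s n = wpow (s (n - 1)) (d n) ++ s (n - 2)) :
    ∀ n : ℤ, -1 ≤ n → s n = (s n).dropLast ++ [if Odd n then true else false] := by
  intro n hn
  have e : n = ((n + 1).toNat : ℤ) - 1 := by omega
  rw [e]
  exact s_last_aux d s hs1 hs0 hs (n + 1).toNat

lemma s_ne_nil (d : ℤ → ℕ) (s : ℤ → Word)
    (hs1 : s (-1) = [true]) (hs0 : s 0 = [false])
    (hs : ∀ n : ℤ, 1 ≤ n → s n = wpow (s (n - 1)) (d n) ++ s (n - 2)) :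
    ∀ n : ℤ, -1 ≤ n → s n ≠ [] := by
  intro n hn
  rw [s_last d s hs1 hs0 hs n hn]
  simp

/-- For all `n ≥ 0`, `vₙ₋₁ = (wₙ₋₁ vₙ₋₂)^(dₙ₊₁ - 1) wₙ₋₁`. -/
theorem adjoining_singular_word_formula (d : ℤ → ℕ) (s : ℤ → Word)
    (hd : ∀ n : ℤ, 1 ≤ n → 1 ≤ d n)
    (hs1 : s (-1) = [true]) (hs0 : s 0 = [false])
    (hs : ∀ n : ℤ, 1 ≤ n → s n = wpow (s (n - 1)) (d n) ++ s (n - 2))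
    (w : ℤ → Word)
    (hw : ∀ n : ℤ, 0 ≤ n → w n = (if Odd n then [false] else [true]) ++ (s n).dropLast)
    (hwm1 : w (-1) = [false]) (hwm2 : w (-2) = [])
    (v : ℤ → Word)
    (hv : ∀ n : ℤ, -1 ≤ n → v n = (if Odd n then [false] else [true]) ++ (wpow (s (n + 1)) (d (n + 2) - 1) ++ s n).dropLast)
    (hvm2 : v (-2) = []) :
    ∀ n : ℤ, 0 ≤ n →
      v (n - 1) = wpow (w (n - 1) ++ v (n - 2)) (d (n + 1) - 1) ++ w (n - 1) := by
  intro n hn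
  rcases eq_or_lt_of_le hn with h0 | h1
  · -- n = 0
    subst h0
    have h := hv (-1) (le_refl _)
    have e1 : (-1 : ℤ) + 1 = 0 := by norm_num
    have e2 : (-1 : ℤ) + 2 = 1 := by norm_num
    rw [e1, e2] at h
    rw [if_pos ⟨-1, by norm_num⟩, hs0, hs1, List.dropLast_concat] at h
    have e3 : (0 : ℤ) - 1 = -1 := by norm_num
    have e4 : (0 : ℤ) - 2 = -2 := by norm_num
    have e5 : (0 : ℤ) + 1 = 1 := by norm_num
    rw [e3, e4, e5, h, hwm1, hvm2, List.append_nil]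
    simpa using wpow_comm [false] [] (d 1 - 1)
  · -- n ≥ 1
    set k := d (n + 1) - 1 with hk
    -- v (n-1)
    have hvn : v (n - 1) = (if Odd (n - 1) then [false] else [true])
        ++ (wpow (s n) k ++ s (n - 1)).dropLast := by
      have h := hv (n - 1) (by omega)
      have e1 : n - 1 + 1 = n := by ring
      have e2 : n - 1 + 2 = n + 1 := by ring
      rw [e1, e2] at h
      exact h
    set L : Word := if Odd (n - 1) then [false] else [true] with hL
    -- v (n-2)
    have hvn2 : v (n - 2) = (if Odd (n - 2) then [false] else [true])
        ++ (wpow (s (n - 1)) (d n - 1) ++ s (n - 2)).dropLast := by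
      have h := hv (n - 2) (by omega)
      have e1 : n - 2 + 1 = n - 1 := by ring
      have e2 : n - 2 + 2 = n := by ring
      rw [e1, e2] at h
      exact h
    have hwn : w (n - 1) = L ++ (s (n - 1)).dropLast := hw (n - 1) (by omega)
    -- last letters
    have hsl1 : s (n - 1) = (s (n - 1)).dropLast ++ [if Odd (n - 1) then true else false] :=
      s_last d s hs1 hs0 hs (n - 1) (by omega)
    have hsln : s n = (s n).dropLast ++ [if Odd n then true else false] :=
      s_last d s hs1 hs0 hs n (by omega)
    have hs2ne : s (n - 2) ≠ [] := s_ne_nil d s hs1 hs0 hs (n - 2) (by omega)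
    have hs1ne : s (n - 1) ≠ [] := s_ne_nil d s hs1 hs0 hs (n - 1) (by omega)
    have hpar1 : Odd (n - 1) ↔ ¬ Odd n := by simp only [Int.odd_iff]; omega
    have hpar2 : Odd (n - 2) ↔ Odd n := by simp only [Int.odd_iff]; omega
    -- [last of s(n-1)] = if Odd (n-2) then [false] else [true]
    have key1 : (s (n - 1)).dropLast ++ (if Odd (n - 2) then ([false] : Word) else [true])
        = s (n - 1) := by
      by_cases h : Odd n
      · rw [if_pos (hpar2.mpr h)]
        conv_rhs => rw [hsl1]
        rw [if_neg (fun hh => (hpar1.mp hh) h)]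
      · rw [if_neg (fun hh => h (hpar2.mp hh))]
        conv_rhs => rw [hsl1]
        rw [if_pos (hpar1.mpr h)]
    -- s n = dropLast (s n) ++ L
    have key2 : s n = (s n).dropLast ++ L := by
      conv_lhs => rw [hsln]
      rw [hL]
      by_cases h : Odd n
      · rw [if_pos h, if_neg (fun hh => (hpar1.mp hh) h)]
      · rw [if_neg h, if_pos (hpar1.mpr h)]
    -- w(n-1) ++ v(n-2) = L ++ dropLast (s n)
    have hwv : w (n - 1) ++ v (n - 2) = L ++ (s n).dropLast := by
      have hdnsucc : d n = (d n - 1) + 1 := by have := hd n (by omega); omega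
      have hsn : s n = s (n - 1) ++ (wpow (s (n - 1)) (d n - 1) ++ s (n - 2)) := by
        rw [hs n (by omega)]
        conv_lhs => rw [hdnsucc]
        rw [wpow_succ, List.append_assoc]
      have hdl : (s n).dropLast
          = s (n - 1) ++ (wpow (s (n - 1)) (d n - 1) ++ s (n - 2)).dropLast := by
        rw [hsn, List.dropLast_append_of_ne_nil]
        simp [hs2ne]
      rw [hwn, hvn2, hdl, ← key1]
      simp only [List.append_assoc, List.append_cancel_left_eq]
      by_cases h : Odd (n - 2) <;> simp [h, List.append_assoc]
    rw [hwv, hvn, hwn]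
    rw [List.dropLast_append_of_ne_nil hs1ne]
    conv_lhs => rw [show wpow (s n) k = wpow ((s n).dropLast ++ L) k by rw [← key2]]
    rw [← List.append_assoc, wpow_comm, List.append_assoc]
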